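/- arXiv:2507.05710 — 4 statements merged into one kernel-verified Lean document; each statement's English description precedes it below -/
import Mathlib

section
/- Fix σ > 0 and ε ∈ (0,1). For each μ ∈ ℝ let X_μ ~ N(μ, σ²) and let k(μ) = VaR_ε[-|X_μ|], i.e. the unique k ≤ 0 with P(-|X_μ| ≤ k) = ε. Then μ ↦ k(μ) is differentiable and its derivative equals (φ((k(μ)-μ)/σ) - φ((-k(μ)-μ)/σ)) / (φ((k(μ)-μ)/σ) + φ((-k(μ)-μ)/σ)), where φ(z) = (1/√(2π))·exp(-z²/2) is the standard normal probability density function. -/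
open MeasureTheory ProbabilityTheory

/-- The Gaussian measure on ℝ with mean `μ` and standard deviation `σ`. -/
noncomputable def gaussMeas (μ σ : ℝ) : Measure ℝ :=
  gaussianReal μ ⟨σ ^ 2, sq_nonneg σ⟩

/-- The standard normal probability density function `φ(z) = (1/√(2π))·exp(-z²/2)`. -/
noncomputable def stdNormalPdf (z : ℝ) : ℝ :=
  (Real.sqrt (2 * Real.pi))⁻¹ * Real.exp (-z ^ 2 / 2)


lemma stdNormalPdf_eq : stdNormalPdf = gaussianPDFReal 0 1 := by
  ext x
  simp [stdNormalPdf, gaussianPDFReal]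

lemma stdNormalPdf_pos (z : ℝ) : 0 < stdNormalPdf z := by
  rw [stdNormalPdf_eq]; exact gaussianPDFReal_pos 0 1 z one_ne_zero

lemma continuous_stdNormalPdf : Continuous stdNormalPdf := by
  unfold stdNormalPdf; fun_prop

lemma integrable_stdNormalPdf : Integrable stdNormalPdf := by
  rw [stdNormalPdf_eq]; exact integrable_gaussianPDFReal 0 1

noncomputable def stdCdf (t : ℝ) : ℝ := ∫ x in Set.Iic t, stdNormalPdf x

lemma stdCdf_nonneg (t : ℝ) : 0 ≤ stdCdf t :=
  setIntegral_nonneg measurableSet_Iic (fun x _ => (stdNormalPdf_pos x).le)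

lemma hasDerivAt_stdCdf (t : ℝ) : HasDerivAt stdCdf (stdNormalPdf t) t := by
  have key : ∀ u : ℝ, stdCdf u = stdCdf 0 + ∫ x in (0:ℝ)..u, stdNormalPdf x := by
    intro u
    rw [← intervalIntegral.integral_Iic_sub_Iic (integrable_stdNormalPdf.integrableOn)
      (integrable_stdNormalPdf.integrableOn)]
    unfold stdCdf; ring
  have h : HasDerivAt (fun u => stdCdf 0 + ∫ x in (0:ℝ)..u, stdNormalPdf x)
      (stdNormalPdf t) t := by
    refine HasDerivAt.const_add _ ?_
    exact intervalIntegral.integral_hasDerivAt_right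
      (integrable_stdNormalPdf.intervalIntegrable)
      (continuous_stdNormalPdf.stronglyMeasurableAtFilter _ _)
      continuous_stdNormalPdf.continuousAt
  exact h.congr_of_eventuallyEq (Filter.Eventually.of_forall key)

lemma strictMono_stdCdf : StrictMono stdCdf := by
  refine strictMono_of_deriv_pos fun x => ?_
  rw [(hasDerivAt_stdCdf x).deriv]; exact stdNormalPdf_pos x

lemma contDiff_stdCdf : ContDiff ℝ 1 stdCdf := by
  rw [contDiff_one_iff_deriv]
  refine ⟨fun x => (hasDerivAt_stdCdf x).differentiableAt, ?_⟩
  have : deriv stdCdf = stdNormalPdf := funext fun x => (hasDerivAt_stdCdf x).deriv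
  rw [this]; exact continuous_stdNormalPdf


lemma gaussMeas_eq_map (μ σ : ℝ) :
    gaussMeas μ σ = (gaussianReal 0 1).map (fun z => σ * z + μ) := by
  have h1 : (fun z : ℝ => σ * z + μ) = (· + μ) ∘ (σ * ·) := rfl
  rw [h1, ← Measure.map_map (measurable_id'.add_const μ) (measurable_id'.const_mul σ),
    gaussianReal_map_const_mul, gaussianReal_map_add_const]
  unfold gaussMeas
  norm_num
  rfl

lemma std_Iic (t : ℝ) : gaussianReal 0 1 (Set.Iic t) = ENNReal.ofReal (stdCdf t) := by
  rw [gaussianReal_apply_eq_integral 0 one_ne_zero, ← stdNormalPdf_eq]; rfl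

lemma std_singleton (t : ℝ) : gaussianReal 0 1 {t} = 0 :=
  gaussianReal_absolutelyContinuous 0 one_ne_zero (by simp)

lemma std_Ici (t : ℝ) : gaussianReal 0 1 (Set.Ici t) = 1 - ENNReal.ofReal (stdCdf t) := by
  have h1 : gaussianReal 0 1 (Set.Iio t) = ENNReal.ofReal (stdCdf t) := by
    rw [measure_congr (Iio_ae_eq_Iic' (std_singleton t)), std_Iic]
  rw [← Set.compl_Iio, measure_compl measurableSet_Iio (measure_ne_top _ _), h1, measure_univ]

lemma key_eq (σ ε : ℝ) (hσ : 0 < σ) (hε : ε ∈ Set.Ioo (0:ℝ) 1) (μ K : ℝ) (hK : K ≤ 0)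
    (h : gaussMeas μ σ {x | -|x| ≤ K} = ENNReal.ofReal ε) :
    stdCdf (σ⁻¹ * (K - μ)) - stdCdf (σ⁻¹ * (-K - μ)) = ε - 1 := by
  have hKlt : K < 0 := by
    rcases lt_or_eq_of_le hK with h' | h'
    · exact h'
    · exfalso
      rw [h'] at h
      have huniv : {x : ℝ | -|x| ≤ (0:ℝ)} = Set.univ := by
        ext x; simp [neg_nonpos_of_nonneg (abs_nonneg x)]
      rw [huniv] at h
      have hu : (gaussMeas μ σ) Set.univ = 1 := by
        unfold gaussMeas; exact (instIsProbabilityMeasureGaussianReal _ _).measure_univ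
      rw [hu] at h
      have := (ENNReal.ofReal_eq_one.mp h.symm)
      linarith [hε.2]
  set a := σ⁻¹ * (K - μ) with ha
  set b := σ⁻¹ * (-K - μ) with hb
  have hab : a < b := by
    have h0 : 0 < σ⁻¹ := inv_pos.mpr hσ
    have : σ⁻¹ * (K - μ) < σ⁻¹ * (-K - μ) := by
      apply mul_lt_mul_of_pos_left _ h0
      linarith
    linarith
  have hmeas : MeasurableSet {x : ℝ | -|x| ≤ K} := by
    have : {x : ℝ | -|x| ≤ K} = (fun x : ℝ => -|x|) ⁻¹' Set.Iic K := rfl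
    rw [this]
    exact ((continuous_abs.neg).measurable) measurableSet_Iic
  have h1 : ∀ z : ℝ, z ≤ a ↔ σ * z + μ ≤ K := by
    intro z
    rw [ha, le_inv_mul_iff₀ hσ]
    constructor <;> intro <;> linarith
  have h2 : ∀ z : ℝ, b ≤ z ↔ -K ≤ σ * z + μ := by
    intro z
    rw [hb, inv_mul_le_iff₀ hσ]
    constructor <;> intro <;> linarith
  have hpre : (fun z : ℝ => σ * z + μ) ⁻¹' {x : ℝ | -|x| ≤ K} = Set.Iic a ∪ Set.Ici b := by
    ext z
    simp only [Set.mem_preimage, Set.mem_setOf_eq, Set.mem_union, Set.mem_Iic, Set.mem_Ici]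
    rw [neg_le, le_abs, h1 z, h2 z]
    constructor <;> rintro (h' | h') <;> first | (left; linarith) | (right; linarith)
  have hmain : gaussMeas μ σ {x : ℝ | -|x| ≤ K}
      = ENNReal.ofReal (stdCdf a) + (1 - ENNReal.ofReal (stdCdf b)) := by
    rw [gaussMeas_eq_map, Measure.map_apply (by fun_prop) hmeas, hpre,
      measure_union (Set.Iic_disjoint_Ici.mpr (not_le.mpr hab)) measurableSet_Ici,
      std_Iic, std_Ici]
  rw [hmain] at h
  have hble : ENNReal.ofReal (stdCdf b) ≤ 1 := by
    rw [← std_Iic]; exact prob_le_one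
  have h3 : ENNReal.ofReal (stdCdf a) + 1 = ENNReal.ofReal ε + ENNReal.ofReal (stdCdf b) := by
    have := congrArg (· + ENNReal.ofReal (stdCdf b)) h
    simpa [add_assoc, tsub_add_cancel_of_le hble] using this
  rw [← ENNReal.ofReal_one, ← ENNReal.ofReal_add (stdCdf_nonneg a) zero_le_one,
    ← ENNReal.ofReal_add hε.1.le (stdCdf_nonneg b)] at h3
  have h4 := (ENNReal.ofReal_eq_ofReal_iff (by linarith [stdCdf_nonneg a])
    (by linarith [stdCdf_nonneg b, hε.1.le])).mp h3
  linarith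

theorem varMain (σ ε : ℝ) (hσ : 0 < σ) (hε : ε ∈ Set.Ioo (0:ℝ) 1) (k : ℝ → ℝ)
    (hkey : ∀ μ, stdCdf (σ⁻¹ * (k μ - μ)) - stdCdf (σ⁻¹ * (-k μ - μ)) = ε - 1) :
    ∀ μ, HasDerivAt k
      ((stdNormalPdf ((k μ - μ) / σ) - stdNormalPdf ((-k μ - μ) / σ)) /
        (stdNormalPdf ((k μ - μ) / σ) + stdNormalPdf ((-k μ - μ) / σ))) μ := by
  intro μ₀
  have hσ' : σ ≠ 0 := ne_of_gt hσ
  have hinv0 : (0:ℝ) < σ⁻¹ := inv_pos.mpr hσ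
  set c := k μ₀ with hc
  set A := stdNormalPdf (σ⁻¹ * (c - μ₀)) with hA
  set B := stdNormalPdf (σ⁻¹ * (-c - μ₀)) with hB
  have hApos := stdNormalPdf_pos (σ⁻¹ * (c - μ₀))
  have hBpos := stdNormalPdf_pos (σ⁻¹ * (-c - μ₀))
  rw [← hA] at hApos; rw [← hB] at hBpos
  set aa := (B - A) * σ⁻¹ with haa
  set bb := (A + B) * σ⁻¹ with hbb
  have hbb0 : bb ≠ 0 := by positivity
  -- the linear maps
  set L₁ : ℝ × ℝ →L[ℝ] ℝ :=
    σ⁻¹ • (ContinuousLinearMap.snd ℝ ℝ ℝ - ContinuousLinearMap.fst ℝ ℝ ℝ) with hL₁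
  set L₂ : ℝ × ℝ →L[ℝ] ℝ :=
    σ⁻¹ • (-ContinuousLinearMap.snd ℝ ℝ ℝ - ContinuousLinearMap.fst ℝ ℝ ℝ) with hL₂
  have hL₁app : ∀ p : ℝ × ℝ, L₁ p = σ⁻¹ * (p.2 - p.1) := fun p => by
    simp [hL₁]
  have hL₂app : ∀ p : ℝ × ℝ, L₂ p = σ⁻¹ * (-p.2 - p.1) := fun p => by
    simp [hL₂]; try ring
  set G : ℝ × ℝ → ℝ := fun p => stdCdf (σ⁻¹ * (p.2 - p.1)) - stdCdf (σ⁻¹ * (-p.2 - p.1))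
    with hGdef
  -- strict derivative of G
  have hΦs : ∀ x : ℝ, HasStrictDerivAt stdCdf (stdNormalPdf x) x := fun x =>
    (contDiff_stdCdf.contDiffAt).hasStrictDerivAt' (hasDerivAt_stdCdf x) one_ne_zero
  have hG : HasStrictFDerivAt G (A • L₁ - B • L₂) (μ₀, c) := by
    have h1 : HasStrictFDerivAt (stdCdf ∘ L₁) (A • L₁) (μ₀, c) := by
      have := (hΦs (L₁ (μ₀, c))).comp_hasStrictFDerivAt (μ₀, c) (L₁.hasStrictFDerivAt)
      rwa [hL₁app (μ₀, c)] at this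
    have h2 : HasStrictFDerivAt (stdCdf ∘ L₂) (B • L₂) (μ₀, c) := by
      have := (hΦs (L₂ (μ₀, c))).comp_hasStrictFDerivAt (μ₀, c) (L₂.hasStrictFDerivAt)
      rwa [hL₂app (μ₀, c)] at this
    have h3 := h1.sub h2
    have hfun : (fun p => (stdCdf ∘ L₁) p - (stdCdf ∘ L₂) p) = G := by
      funext p
      simp [Function.comp, hL₁app p, hL₂app p, hGdef]
    rw [← hfun]; exact h3
  -- the equivalence
  set L : ℝ × ℝ →L[ℝ] ℝ × ℝ :=
    (ContinuousLinearMap.fst ℝ ℝ ℝ).prod (A • L₁ - B • L₂) with hL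
  set M : ℝ × ℝ →L[ℝ] ℝ × ℝ :=
    (ContinuousLinearMap.fst ℝ ℝ ℝ).prod
      (bb⁻¹ • (ContinuousLinearMap.snd ℝ ℝ ℝ - aa • ContinuousLinearMap.fst ℝ ℝ ℝ)) with hM
  have hLapp : ∀ p : ℝ × ℝ, L p = (p.1, aa * p.1 + bb * p.2) := fun p => by
    simp [hL, hL₁app p, hL₂app p, haa, hbb]; try ring
  have hMapp : ∀ p : ℝ × ℝ, M p = (p.1, bb⁻¹ * (p.2 - aa * p.1)) := fun p => by
    simp [hM]; try ring
  set e : (ℝ × ℝ) ≃L[ℝ] (ℝ × ℝ) := ContinuousLinearEquiv.equivOfInverse L M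
    (fun p => by rw [hLapp p, hMapp]; field_simp; ext <;> simp [hbb0])
    (fun p => by rw [hMapp p, hLapp]; field_simp; ext <;> simp) with he
  -- Ψ and its local inverse
  set Ψ : ℝ × ℝ → ℝ × ℝ := fun p => (p.1, G p) with hΨdef
  have hΨ : HasStrictFDerivAt Ψ (e : (ℝ × ℝ) →L[ℝ] (ℝ × ℝ)) (μ₀, c) :=
    HasStrictFDerivAt.prodMk (ContinuousLinearMap.fst ℝ ℝ ℝ).hasStrictFDerivAt hG
  have hΨp₀ : Ψ (μ₀, c) = (μ₀, ε - 1) := by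
    simp only [hΨdef, hGdef]
    rw [Prod.mk.injEq]
    exact ⟨rfl, hkey μ₀⟩
  set linv := hΨ.localInverse Ψ e (μ₀, c) with hlinv
  have hinv : HasStrictFDerivAt linv (e.symm : (ℝ × ℝ) →L[ℝ] (ℝ × ℝ)) (μ₀, ε - 1) := by
    have := hΨ.to_localInverse
    rwa [hΨp₀] at this
  have hj : HasDerivAt (fun μ : ℝ => ((μ : ℝ), ε - 1)) ((1:ℝ), (0:ℝ)) μ₀ :=
    HasDerivAt.prodMk (hasDerivAt_id μ₀) (hasDerivAt_const μ₀ _)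
  have hcomp : HasDerivAt (fun μ : ℝ => linv (μ, ε - 1)) (e.symm ((1:ℝ), (0:ℝ))) μ₀ :=
    by have := (HasStrictFDerivAt.hasFDerivAt hinv).comp_hasDerivAt μ₀ hj; exact this
  have hψ : HasDerivAt (fun μ : ℝ => (linv (μ, ε - 1)).2) ((e.symm ((1:ℝ), (0:ℝ))).2) μ₀ :=
    (ContinuousLinearMap.snd ℝ ℝ ℝ).hasFDerivAt.comp_hasDerivAt μ₀ hcomp
  -- value of the derivative
  have hval : (e.symm ((1:ℝ), (0:ℝ))).2 = (A - B) / (A + B) := by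
    have : e.symm ((1:ℝ), (0:ℝ)) = M ((1:ℝ), (0:ℝ)) := rfl
    rw [this, hMapp]
    simp only
    rw [haa, hbb]
    field_simp
    ring
  -- strict monotonicity in second variable
  have hmono : ∀ μ' : ℝ, StrictMono (fun y => G (μ', y)) := by
    intro μ' y₁ y₂ hy
    simp only [hGdef]
    have e1 : σ⁻¹ * (y₁ - μ') < σ⁻¹ * (y₂ - μ') := by
      apply mul_lt_mul_of_pos_left _ hinv0; linarith
    have e2 : σ⁻¹ * (-y₂ - μ') < σ⁻¹ * (-y₁ - μ') := by
      apply mul_lt_mul_of_pos_left _ hinv0; linarith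
    have := strictMono_stdCdf e1
    have := strictMono_stdCdf e2
    linarith
  -- eventual equality of k and the local-inverse solution
  have ht : Filter.Tendsto (fun μ : ℝ => ((μ : ℝ), ε - 1)) (nhds μ₀) (nhds (μ₀, ε - 1)) :=
    ((continuous_id.prodMk continuous_const).tendsto μ₀)
  have hre : ∀ᶠ y in nhds (μ₀, ε - 1), Ψ (linv y) = y := by
    have := hΨ.eventually_right_inverse
    rwa [hΨp₀] at this
  have heq : ∀ᶠ μ in nhds μ₀, k μ = (linv (μ, ε - 1)).2 := by
    filter_upwards [ht.eventually hre] with μ hμ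
    set u := linv (μ, ε - 1) with hu
    clear_value u
    have h1 : u.1 = μ := congrArg Prod.fst hμ
    have h2 : G u = ε - 1 := congrArg Prod.snd hμ
    have h3 : G (μ, u.2) = ε - 1 := by
      rw [← h1, Prod.mk.eta, h2]
    have h4 : G (μ, k μ) = ε - 1 := hkey μ
    exact (hmono μ).injective (h4.trans h3.symm)
  have hfinal : HasDerivAt k ((A - B) / (A + B)) μ₀ := by
    rw [← hval]
    exact hψ.congr_of_eventuallyEq heq
  have harg1 : (k μ₀ - μ₀) / σ = σ⁻¹ * (c - μ₀) := by rw [← hc]; field_simp; try ring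
  have harg2 : (-k μ₀ - μ₀) / σ = σ⁻¹ * (-c - μ₀) := by rw [← hc]; field_simp; try ring
  rw [harg1, harg2, ← hA, ← hB]
  exact hfinal

/-- Fix `σ > 0` and `ε ∈ (0,1)`. For each `μ`, let `k μ = VaR_ε[-|X_μ|]` with
`X_μ ~ N(μ, σ²)`, i.e. the unique `k ≤ 0` with `P(-|X_μ| ≤ k) = ε`. Then `k` is
differentiable in `μ`, with derivative
`(φ((k(μ)-μ)/σ) - φ((-k(μ)-μ)/σ)) / (φ((k(μ)-μ)/σ) + φ((-k(μ)-μ)/σ))`. -/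
theorem hasDerivAt_var_neg_abs
    (σ ε : ℝ) (hσ : 0 < σ) (hε : ε ∈ Set.Ioo (0 : ℝ) 1)
    (k : ℝ → ℝ) (hk0 : ∀ μ, k μ ≤ 0)
    (hk : ∀ μ, gaussMeas μ σ {x | -|x| ≤ k μ} = ENNReal.ofReal ε) :
    ∀ μ, HasDerivAt k
      ((stdNormalPdf ((k μ - μ) / σ) - stdNormalPdf ((-k μ - μ) / σ)) /
        (stdNormalPdf ((k μ - μ) / σ) + stdNormalPdf ((-k μ - μ) / σ))) μ := by
  exact varMain σ ε hσ hε k (fun μ => key_eq σ ε hσ hε μ (k μ) (hk0 μ) (hk μ))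
end

section
/- Let X ~ N(μ, σ²) with σ > 0 and let ε ∈ (0,1). Then CVaR_ε[-|X|²] ≤ -(CVaR_ε[-|X|])². -/
open MeasureTheory ProbabilityTheory

/-- The conditional value-at-risk of a function `Y` of a random variable with law `P`,
at level `ε`, given that `k` is the value-at-risk `VaR_ε[Y]`:
`CVaR_ε[Y] = (1/(1-ε))·E[Y·1{Y ≥ k}]`. -/
noncomputable def cvar (P : Measure ℝ) (ε : ℝ) (Y : ℝ → ℝ) (k : ℝ) : ℝ :=
  (1 / (1 - ε)) * ∫ x in {x | k ≤ Y x}, Y x ∂P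

lemma abs_tail_eq_of_measure_eq (P : Measure ℝ) [IsProbabilityMeasure P]
    (hac : MeasureTheory.volume ≪ P) {a b : ℝ} (ha : 0 < a) (hb : 0 < b)
    (h : P {x | a ≤ |x|} = P {x | b ≤ |x|}) : a = b := by
  have key : ∀ u v : ℝ, 0 < u → u < v → P {x | u ≤ |x|} = P {x | v ≤ |x|} → False := by
    intro u v hu huv heq
    have hmv : MeasurableSet {x : ℝ | v ≤ |x|} :=
      measurableSet_le measurable_const continuous_abs.measurable
    have hsub : {x : ℝ | v ≤ |x|} ⊆ {x : ℝ | u ≤ |x|} := fun x hx =>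
      le_trans huv.le hx
    have hdiff : P ({x : ℝ | u ≤ |x|} \ {x : ℝ | v ≤ |x|}) = 0 := by
      rw [measure_diff hsub hmv.nullMeasurableSet (measure_ne_top _ _), heq, tsub_self]
    have hIoo : Set.Ioo u v ⊆ {x : ℝ | u ≤ |x|} \ {x : ℝ | v ≤ |x|} := by
      intro x hx
      have hx0 : 0 < x := lt_trans hu hx.1
      constructor
      · show u ≤ |x|
        rw [abs_of_pos hx0]; exact hx.1.le
      · show ¬ v ≤ |x|
        rw [abs_of_pos hx0]; exact not_le.mpr hx.2
    have : P (Set.Ioo u v) = 0 := measure_mono_null hIoo hdiff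
    have hvol : (MeasureTheory.volume : Measure ℝ) (Set.Ioo u v) = 0 := hac this
    rw [Real.volume_Ioo] at hvol
    simp only [ENNReal.ofReal_eq_zero] at hvol
    linarith
  rcases lt_trichotomy a b with hlt | heq | hgt
  · exact (key a b ha hlt h).elim
  · exact heq
  · exact (key b a hb hgt h.symm).elim

/-- For `X ~ N(μ, σ²)` with `σ > 0` and `ε ∈ (0,1)`,
`CVaR_ε[-|X|²] ≤ -(CVaR_ε[-|X|])²`, where `k = VaR_ε[-|X|]` and `k₂ = VaR_ε[-|X|²]`
are the respective values-at-risk. -/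
theorem cvar_neg_abs_sq_le_neg_sq_cvar_neg_abs
    (μ σ ε k k₂ : ℝ) (hσ : 0 < σ) (hε : ε ∈ Set.Ioo (0 : ℝ) 1)
    (hk : gaussMeas μ σ {x | -|x| ≤ k} = ENNReal.ofReal ε)
    (hk₂ : gaussMeas μ σ {x | -|x| ^ 2 ≤ k₂} = ENNReal.ofReal ε) :
    cvar (gaussMeas μ σ) ε (fun x => -|x| ^ 2) k₂ ≤
      -(cvar (gaussMeas μ σ) ε (fun x => -|x|) k) ^ 2 := by
  obtain ⟨hε0, hε1⟩ := hε
  have hv : (⟨σ ^ 2, sq_nonneg σ⟩ : NNReal) ≠ 0 := by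
    intro hcon
    have : σ ^ 2 = 0 := congrArg NNReal.toReal hcon
    exact absurd this (pow_ne_zero 2 hσ.ne')
  set P := gaussMeas μ σ with hP
  haveI hprob : IsProbabilityMeasure P := by
    rw [hP]; unfold gaussMeas; exact ProbabilityTheory.instIsProbabilityMeasureGaussianReal _ _
  have hac : MeasureTheory.volume ≪ P := by
    rw [hP]; exact gaussianReal_absolutelyContinuous' μ hv
  have hac' : P ≪ MeasureTheory.volume := by
    rw [hP]; exact gaussianReal_absolutelyContinuous μ hv
  have hne1 : (ENNReal.ofReal ε) < 1 := by
    rw [← ENNReal.ofReal_one]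
    exact ENNReal.ofReal_lt_ofReal_iff_of_nonneg hε0.le |>.mpr hε1
  -- k < 0
  have hk_neg : k < 0 := by
    by_contra hcon
    push_neg at hcon
    have : {x : ℝ | -|x| ≤ k} = Set.univ := by
      ext x; simp only [Set.mem_setOf_eq, Set.mem_univ, iff_true]
      exact le_trans (neg_nonpos.mpr (abs_nonneg x)) hcon
    rw [this, measure_univ] at hk
    exact absurd hk.symm (ne_of_lt hne1)
  have hk₂_neg : k₂ < 0 := by
    by_contra hcon
    push_neg at hcon
    have : {x : ℝ | -|x| ^ 2 ≤ k₂} = Set.univ := by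
      ext x; simp only [Set.mem_setOf_eq, Set.mem_univ, iff_true]
      exact le_trans (neg_nonpos.mpr (sq_nonneg |x|)) hcon
    rw [this, measure_univ] at hk₂
    exact absurd hk₂.symm (ne_of_lt hne1)
  set c : ℝ := -k with hc
  have hc_pos : 0 < c := neg_pos.mpr hk_neg
  set c₂ : ℝ := Real.sqrt (-k₂) with hc₂
  have hc₂_pos : 0 < c₂ := Real.sqrt_pos.mpr (neg_pos.mpr hk₂_neg)
  have hc₂_sq : c₂ ^ 2 = -k₂ := Real.sq_sqrt (neg_pos.mpr hk₂_neg).le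
  -- set descriptions
  have hset1 : {x : ℝ | -|x| ≤ k} = {x : ℝ | c ≤ |x|} := by
    ext x; simp only [Set.mem_setOf_eq, hc]; constructor <;> intro h <;> linarith
  have hset2 : {x : ℝ | -|x| ^ 2 ≤ k₂} = {x : ℝ | c₂ ≤ |x|} := by
    ext x; simp only [Set.mem_setOf_eq]
    constructor
    · intro h
      have h2 : c₂ ^ 2 ≤ |x| ^ 2 := by rw [hc₂_sq]; linarith
      have := Real.sqrt_le_sqrt h2
      rwa [Real.sqrt_sq hc₂_pos.le, Real.sqrt_sq (abs_nonneg x)] at this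
    · intro h
      have h2 : c₂ ^ 2 ≤ |x| ^ 2 := pow_le_pow_left₀ hc₂_pos.le h 2
      rw [hc₂_sq] at h2; linarith
  -- c = c₂
  have hcc : c = c₂ := by
    refine abs_tail_eq_of_measure_eq P hac hc_pos hc₂_pos ?_
    rw [← hset1, ← hset2, hk, hk₂]
  -- both integration sets equal Icc (-c) c
  set A : Set ℝ := Set.Icc (-c) c with hA
  have hAset1 : {x : ℝ | k ≤ -|x|} = A := by
    ext x
    simp only [hA, Set.mem_setOf_eq, Set.mem_Icc, ← abs_le (a := x) (b := c), hc]
    constructor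
    · intro h; exact abs_le.mp (by linarith)
    · intro h; linarith [abs_le.mpr h]
  have hAset2 : {x : ℝ | k₂ ≤ -|x| ^ 2} = A := by
    ext x
    simp only [hA, Set.mem_setOf_eq, Set.mem_Icc, ← abs_le (a := x) (b := c)]
    constructor
    · intro h
      have h2 : |x| ^ 2 ≤ c₂ ^ 2 := by rw [hc₂_sq]; linarith
      have := Real.sqrt_le_sqrt h2
      rw [Real.sqrt_sq hc₂_pos.le, Real.sqrt_sq (abs_nonneg x)] at this
      rw [hcc]; exact this
    · intro h
      rw [hcc] at h
      have h2 : |x| ^ 2 ≤ c₂ ^ 2 := pow_le_pow_left₀ (abs_nonneg x) h 2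
      rw [hc₂_sq] at h2; linarith
  have hAmeas : MeasurableSet A := measurableSet_Icc
  -- measure of A
  have hPA : P A = ENNReal.ofReal (1 - ε) := by
    have hcompl : Aᶜ = {x : ℝ | c < |x|} := by
      ext x
      simp only [hA, Set.mem_compl_iff, Set.mem_Icc, Set.mem_setOf_eq,
        ← abs_le (a := x) (b := c), not_le]
    have hsingle : P {x : ℝ | |x| = c} = 0 := by
      have hsub : {x : ℝ | |x| = c} ⊆ {c, -c} := by
        intro x hx
        rcases abs_eq hc_pos.le |>.mp hx with h | h
        · exact Or.inl h
        · exact Or.inr h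
      refine measure_mono_null hsub ?_
      have h1 : P {c} = 0 := hac' (MeasureTheory.measure_singleton c)
      have h2 : P {-c} = 0 := hac' (MeasureTheory.measure_singleton (-c))
      refine le_antisymm ?_ (by simp)
      calc P {c, -c} ≤ P {c} + P {-c} := measure_union_le _ _
        _ = 0 := by rw [h1, h2, add_zero]
    have htail : P {x : ℝ | c ≤ |x|} = ENNReal.ofReal ε := by
      rw [← hset1]; exact hk
    have hPAc : P Aᶜ = ENNReal.ofReal ε := by
      have hdecomp : {x : ℝ | c ≤ |x|} = Aᶜ ∪ {x : ℝ | |x| = c} := by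
        rw [hcompl]
        ext x
        simp only [Set.mem_setOf_eq, Set.mem_union]
        constructor
        · intro h; rcases lt_or_eq_of_le h with h | h
          · exact Or.inl h
          · exact Or.inr h.symm
        · intro h; rcases h with h | h
          · exact h.le
          · exact h.ge
      have hle1 : P Aᶜ ≤ P {x : ℝ | c ≤ |x|} := by
        refine measure_mono ?_
        rw [hcompl]; intro x hx
        simp only [Set.mem_setOf_eq] at hx ⊢
        exact hx.le
      have hle2 : P {x : ℝ | c ≤ |x|} ≤ P Aᶜ := by
        rw [hdecomp]
        calc P (Aᶜ ∪ {x : ℝ | |x| = c}) ≤ P Aᶜ + P {x : ℝ | |x| = c} := measure_union_le _ _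
          _ = P Aᶜ := by rw [hsingle, add_zero]
      rw [← htail]; exact le_antisymm hle1 hle2
    have hsum : P A + ENNReal.ofReal ε = 1 := by
      have := measure_add_measure_compl (μ := P) hAmeas
      rwa [hPAc, measure_univ] at this
    have h1 : P A = 1 - ENNReal.ofReal ε :=
      ENNReal.eq_sub_of_add_eq (by simp) hsum
    rw [h1, ← ENNReal.ofReal_one, ← ENNReal.ofReal_sub _ hε0.le]
  have h1ε : (0 : ℝ) < 1 - ε := by linarith
  -- restricted measure
  set ν : Measure ℝ := P.restrict A with hν
  haveI : IsFiniteMeasure ν := by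
    rw [hν]; infer_instance
  have hν_univ : ν Set.univ = ENNReal.ofReal (1 - ε) := by
    rw [hν, Measure.restrict_apply_univ, hPA]
  -- integrability / memℒp
  have habs_meas : AEStronglyMeasurable (fun x : ℝ => |x|) ν :=
    continuous_abs.aestronglyMeasurable
  have hbound : ∀ᵐ x ∂ν, ‖|x|‖ ≤ c := by
    rw [hν]
    refine (ae_restrict_iff' hAmeas).mpr (ae_of_all _ fun x hx => ?_)
    rw [Real.norm_eq_abs, abs_abs]
    exact abs_le.mpr ⟨hx.1, hx.2⟩
  have hf2 : MemLp (fun x : ℝ => |x|) 2 ν :=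
    (memLp_top_of_bound habs_meas c hbound).mono_exponent le_top
  have hg2 : MemLp (fun _ : ℝ => (1 : ℝ)) 2 ν := memLp_const 1
  have hconj : Real.HolderConjugate 2 2 := Real.HolderConjugate.two_two
  have hofReal2 : (ENNReal.ofReal 2) = (2 : ENNReal) := by
    simp [ENNReal.ofReal_ofNat]
  have hCS := MeasureTheory.integral_mul_le_Lp_mul_Lq_of_nonneg hconj
    (ae_of_all _ fun x : ℝ => abs_nonneg x) (ae_of_all _ fun _ : ℝ => zero_le_one)
    (by rw [hofReal2]; exact hf2) (by rw [hofReal2]; exact hg2)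
  simp only [mul_one, Real.one_rpow] at hCS
  have hrpow2 : ∀ y : ℝ, y ^ (2 : ℝ) = y ^ 2 := fun y => by
    rw [show (2 : ℝ) = ((2 : ℕ) : ℝ) by norm_num, Real.rpow_natCast]
  have hint_one : ∫ _ : ℝ, (1 : ℝ) ∂ν = 1 - ε := by
    rw [integral_const, measureReal_def, hν_univ, smul_eq_mul, mul_one, ENNReal.toReal_ofReal h1ε.le]
  set J₁ : ℝ := ∫ x, |x| ∂ν with hJ₁
  set J₂ : ℝ := ∫ x, x ^ 2 ∂ν with hJ₂
  have hint_sq : ∫ x, |x| ^ (2 : ℝ) ∂ν = J₂ := by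
    rw [hJ₂]
    refine integral_congr_ae (ae_of_all _ fun x => ?_)
    show |x| ^ (2 : ℝ) = x ^ 2
    rw [hrpow2, sq_abs]
  rw [hint_sq, hint_one] at hCS
  have hJ₁_nonneg : 0 ≤ J₁ := integral_nonneg fun x => abs_nonneg x
  have hJ₂_nonneg : 0 ≤ J₂ := integral_nonneg fun x => sq_nonneg x
  have hsq : ∀ a : ℝ, 0 ≤ a → (a ^ ((1 : ℝ) / 2)) ^ 2 = a := fun a ha => by
    rw [← Real.rpow_natCast (a ^ ((1 : ℝ) / 2)) 2, ← Real.rpow_mul ha]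
    norm_num
  have hCS2 : J₁ ^ 2 ≤ J₂ * (1 - ε) := by
    calc J₁ ^ 2 ≤ (J₂ ^ ((1 : ℝ) / 2) * (1 - ε) ^ ((1 : ℝ) / 2)) ^ 2 :=
          pow_le_pow_left₀ hJ₁_nonneg hCS 2
      _ = (J₂ ^ ((1 : ℝ) / 2)) ^ 2 * ((1 - ε) ^ ((1 : ℝ) / 2)) ^ 2 := mul_pow _ _ 2
      _ = J₂ * (1 - ε) := by rw [hsq _ hJ₂_nonneg, hsq _ h1ε.le]
  -- rewrite cvar
  have hint_eq1 : ∫ x in {x : ℝ | k ≤ -|x|}, -|x| ∂P = -J₁ := by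
    rw [hAset1, hJ₁, hν, ← integral_neg]
  have hint_eq2 : ∫ x in {x : ℝ | k₂ ≤ -|x| ^ 2}, -|x| ^ 2 ∂P = -J₂ := by
    rw [hAset2, hJ₂, hν, ← integral_neg]
    refine integral_congr_ae (ae_of_all _ fun x => ?_)
    show -|x| ^ 2 = -(x ^ 2)
    rw [sq_abs]
  unfold cvar
  simp only [hint_eq1, hint_eq2]
  have ht : (0 : ℝ) < 1 / (1 - ε) := by positivity
  have htu : (1 / (1 - ε)) * (1 - ε) = 1 := by field_simp
  nlinarith [mul_le_mul_of_nonneg_left hCS2 (sq_nonneg (1 / (1 - ε))),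
    mul_pos ht ht, sq_nonneg J₁]
end

section
/- Fix σ > 0 and ε ∈ (0,1). For each μ ∈ ℝ let X_μ ~ N(μ, σ²) and define g(μ) = CVaR_ε[-|X_μ|]. Then g is monotonically decreasing in |μ|: for any μ₁, μ₂ with |μ₁| < |μ₂| one has g(μ₁) > g(μ₂). Equivalently, g is strictly decreasing on (0, ∞), strictly increasing on (-∞, 0), and g(μ) = g(-μ) for all μ. -/
open MeasureTheory ProbabilityTheory
open scoped NNReal ENNReal

namespace CvarAux

noncomputable def vv (σ : ℝ) : ℝ≥0 := ⟨σ ^ 2, sq_nonneg σ⟩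

lemma vv_coe (σ : ℝ) : ((vv σ : ℝ≥0) : ℝ) = σ ^ 2 := rfl

lemma vv_pos {σ : ℝ} (hσ : 0 < σ) : (0:ℝ) < (vv σ : ℝ) := by
  rw [vv_coe]; positivity

lemma vv_ne_zero {σ : ℝ} (hσ : 0 < σ) : vv σ ≠ 0 := by
  intro h
  have := vv_pos hσ
  rw [h] at this
  simp at this

noncomputable def pdf0 (σ x : ℝ) : ℝ := gaussianPDFReal 0 (vv σ) x

lemma pdf0_continuous (σ : ℝ) : Continuous (pdf0 σ) := by
  unfold pdf0 gaussianPDFReal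
  fun_prop

lemma pdf0_pos {σ : ℝ} (hσ : 0 < σ) (x : ℝ) : 0 < pdf0 σ x :=
  gaussianPDFReal_pos _ _ _ (vv_ne_zero hσ)

lemma pdf0_even (σ x : ℝ) : pdf0 σ (-x) = pdf0 σ x := by
  unfold pdf0 gaussianPDFReal
  ring_nf

lemma pdf0_lt {σ : ℝ} (hσ : 0 < σ) {x y : ℝ} (h : x ^ 2 < y ^ 2) :
    pdf0 σ y < pdf0 σ x := by
  have hv := vv_pos hσ
  unfold pdf0 gaussianPDFReal
  have h1 : 0 < (Real.sqrt (2 * Real.pi * (vv σ)))⁻¹ := by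
    have hπ := Real.pi_pos
    have : 0 < Real.sqrt (2 * Real.pi * (vv σ)) := Real.sqrt_pos.2 (by positivity)
    positivity
  apply mul_lt_mul_of_pos_left _ h1
  apply Real.exp_lt_exp.2
  have h2v : (0:ℝ) < 2 * (vv σ) := by positivity
  rw [div_lt_div_iff₀ h2v h2v]
  nlinarith

/-- Antiderivative of the centered pdf. -/
noncomputable def Phi (σ y : ℝ) : ℝ := ∫ u in (0:ℝ)..y, pdf0 σ u

lemma Phi_hasDerivAt (σ y : ℝ) : HasDerivAt (Phi σ) (pdf0 σ y) y :=
  ((pdf0_continuous σ).integral_hasStrictDerivAt 0 y).hasDerivAt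

lemma Phi_continuous (σ : ℝ) : Continuous (Phi σ) :=
  Differentiable.continuous (fun y => (Phi_hasDerivAt σ y).differentiableAt)

/-- `F σ μ t = P_{N(μ,σ²)}(|x| ≤ t)` expressed via `Phi`. -/
noncomputable def F (σ μ t : ℝ) : ℝ := Phi σ (t - μ) - Phi σ (-t - μ)

lemma F_eq_integral (σ μ t : ℝ) :
    F σ μ t = ∫ x in (-t)..t, gaussianPDFReal μ (vv σ) x := by
  have h1 : ∀ x : ℝ, gaussianPDFReal μ (vv σ) x = pdf0 σ (x - μ) := by
    intro x
    rw [pdf0, gaussianPDFReal_sub x μ, zero_add]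
  simp_rw [h1]
  rw [intervalIntegral.integral_comp_sub_right (pdf0 σ) μ]
  rw [F, Phi, Phi]
  rw [intervalIntegral.integral_interval_sub_left
    ((pdf0_continuous σ).intervalIntegrable _ _) ((pdf0_continuous σ).intervalIntegrable _ _)]

lemma gaussMeas_abs_le {σ : ℝ} (hσ : 0 < σ) (μ t : ℝ) (ht : 0 ≤ t) :
    gaussMeas μ σ {x | |x| ≤ t} = ENNReal.ofReal (F σ μ t) := by
  have hset : {x : ℝ | |x| ≤ t} = Set.Icc (-t) t := by
    ext x; simp [abs_le]
  have hvv : (⟨σ ^ 2, sq_nonneg σ⟩ : ℝ≥0) = vv σ := rfl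
  rw [gaussMeas, hvv, gaussianReal_apply_eq_integral μ (vv_ne_zero hσ), hset, F_eq_integral]
  congr 1
  rw [intervalIntegral.integral_of_le (by linarith), ← integral_Icc_eq_integral_Ioc]

lemma F_continuous_t (σ μ : ℝ) : Continuous (fun t => F σ μ t) := by
  unfold F
  exact ((Phi_continuous σ).comp (by fun_prop)).sub ((Phi_continuous σ).comp (by fun_prop))

lemma F_hasDerivAt_t (σ μ t : ℝ) :
    HasDerivAt (fun t => F σ μ t) (pdf0 σ (t - μ) + pdf0 σ (-t - μ)) t := by
  have h1 : HasDerivAt (fun t : ℝ => Phi σ (t - μ)) (pdf0 σ (t - μ) * 1) t :=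
    (Phi_hasDerivAt σ (t - μ)).comp (h := fun x => x - μ) t (((hasDerivAt_id t).sub_const μ))
  have h2 : HasDerivAt (fun t : ℝ => Phi σ (-t - μ)) (pdf0 σ (-t - μ) * (-1)) t :=
    (Phi_hasDerivAt σ (-t - μ)).comp (h := fun x => -x - μ) t (((hasDerivAt_id t).neg.sub_const μ))
  have := h1.sub h2
  exact this.congr_deriv (by ring)

lemma F_strictMono_t {σ : ℝ} (hσ : 0 < σ) (μ : ℝ) : StrictMono (fun t => F σ μ t) := by
  apply strictMono_of_deriv_pos
  intro t
  rw [(F_hasDerivAt_t σ μ t).deriv]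
  have := pdf0_pos hσ (t - μ)
  have := pdf0_pos hσ (-t - μ)
  linarith

lemma F_mono_t {σ : ℝ} (hσ : 0 < σ) (μ : ℝ) : Monotone (fun t => F σ μ t) :=
  (F_strictMono_t hσ μ).monotone

lemma F_zero (σ μ : ℝ) : F σ μ 0 = 0 := by
  simp [F]

lemma F_nonneg {σ : ℝ} (hσ : 0 < σ) (μ : ℝ) {t : ℝ} (ht : 0 ≤ t) : 0 ≤ F σ μ t := by
  have := F_mono_t hσ μ ht
  simp only at this
  rwa [F_zero] at this

lemma F_hasDerivAt_mu (σ t μ : ℝ) :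
    HasDerivAt (fun μ => F σ μ t) (pdf0 σ (t + μ) - pdf0 σ (t - μ)) μ := by
  have h1 : HasDerivAt (fun μ : ℝ => Phi σ (t - μ)) (pdf0 σ (t - μ) * (-1)) μ :=
    (Phi_hasDerivAt σ (t - μ)).comp μ ((hasDerivAt_id μ).const_sub t)
  have h2 : HasDerivAt (fun μ : ℝ => Phi σ (-t - μ)) (pdf0 σ (-t - μ) * (-1)) μ :=
    (Phi_hasDerivAt σ (-t - μ)).comp μ ((hasDerivAt_id μ).const_sub (-t))
  have h := h1.sub h2
  have he : pdf0 σ (-t - μ) = pdf0 σ (t + μ) := by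
    rw [show -t - μ = -(t + μ) by ring, pdf0_even]
  exact h.congr_deriv (by rw [he]; ring)

lemma F_strictAnti_mu {σ : ℝ} (hσ : 0 < σ) {t : ℝ} (ht : 0 < t) :
    StrictAntiOn (fun μ => F σ μ t) (Set.Ici 0) := by
  apply strictAntiOn_of_deriv_neg (convex_Ici 0)
  · exact fun μ _ => ((F_hasDerivAt_mu σ t μ).differentiableAt.continuousAt).continuousWithinAt
  · intro μ hμ
    rw [interior_Ici] at hμ
    rw [(F_hasDerivAt_mu σ t μ).deriv]
    have : (t - μ) ^ 2 < (t + μ) ^ 2 := by nlinarith [Set.mem_Ioi.1 hμ]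
    have := pdf0_lt hσ this
    linarith

lemma F_lt_F {σ : ℝ} (hσ : 0 < σ) {m₁ m₂ t : ℝ} (h1 : 0 ≤ m₁) (h12 : m₁ < m₂) (ht : 0 < t) :
    F σ m₂ t < F σ m₁ t :=
  F_strictAnti_mu hσ ht h1 (le_trans h1 h12.le) h12

lemma instProb (μ σ : ℝ) : IsProbabilityMeasure (gaussMeas μ σ) := by
  unfold gaussMeas; exact ProbabilityTheory.instIsProbabilityMeasureGaussianReal _ _

lemma measurableSet_absLe (c : ℝ) : MeasurableSet {x : ℝ | |x| ≤ c} :=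
  (isClosed_le continuous_abs continuous_const).measurableSet

lemma measurableSet_ltAbs (t : ℝ) : MeasurableSet {x : ℝ | t < |x|} :=
  (isOpen_lt continuous_const continuous_abs).measurableSet

/-- Main structural lemma: the CVaR of `-|X|` in terms of `F`. -/
lemma cvar_formula (σ ε : ℝ) (hσ : 0 < σ) (hε : ε ∈ Set.Ioo (0:ℝ) 1) (m K : ℝ)
    (h : gaussMeas m σ {x | -|x| ≤ K} = ENNReal.ofReal ε) :
    0 < -K ∧ F σ m (-K) = 1 - ε ∧
    cvar (gaussMeas m σ) ε (fun x => -|x|) K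
      = -((1/(1-ε)) * ∫ t in (0:ℝ)..(-K), ((1-ε) - F σ m t)) := by
  obtain ⟨hε0, hε1⟩ := hε
  have hP := instProb m σ
  set P := gaussMeas m σ with hPdef
  set c := -K with hcdef
  have hc : 0 < c := by
    by_contra hc
    push_neg at hc
    have huniv : {x : ℝ | -|x| ≤ K} = Set.univ := by
      ext x
      simp only [Set.mem_setOf_eq, Set.mem_univ, iff_true]
      have := abs_nonneg x
      simp only [hcdef] at hc
      linarith
    rw [huniv, measure_univ] at h
    have : ENNReal.ofReal ε < 1 := ENNReal.ofReal_lt_one.2 hε1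
    rw [← h] at this
    exact lt_irrefl _ this
  have hnull : P {x : ℝ | |x| = c} = 0 := by
    have hsub : {x : ℝ | |x| = c} ⊆ ({c, -c} : Set ℝ) := by
      intro x hx
      rcases (abs_eq (le_of_lt hc)).1 hx with h' | h' <;> simp [h']
    refine measure_mono_null hsub ?_
    have hv : (volume : Measure ℝ) ({c, -c} : Set ℝ) = 0 :=
      Set.Countable.measure_zero ((Set.countable_singleton (-c)).insert c) _
    exact (gaussianReal_absolutelyContinuous m (vv_ne_zero hσ)) hv
  have hseteq : {x : ℝ | -|x| ≤ K} = {x : ℝ | c ≤ |x|} := by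
    ext x; simp only [Set.mem_setOf_eq, hcdef]; constructor <;> intro h' <;> linarith
  rw [hseteq] at h
  have htail : P {x : ℝ | c < |x|} = ENNReal.ofReal ε := by
    apply le_antisymm
    · rw [← h]
      apply measure_mono
      intro x hx
      simp only [Set.mem_setOf_eq] at *
      exact hx.le
    · rw [← h]
      calc P {x : ℝ | c ≤ |x|}
          ≤ P ({x : ℝ | c < |x|} ∪ {x : ℝ | |x| = c}) := by
            apply measure_mono
            intro x hx
            simp only [Set.mem_setOf_eq, Set.mem_union] at *
            rcases lt_or_eq_of_le hx with h'' | h''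
            · exact Or.inl h''
            · exact Or.inr h''.symm
        _ ≤ P {x : ℝ | c < |x|} + P {x : ℝ | |x| = c} := measure_union_le _ _
        _ = P {x : ℝ | c < |x|} := by rw [hnull, add_zero]
  have hPS : P {x : ℝ | |x| ≤ c} = ENNReal.ofReal (1 - ε) := by
    have hcompl : {x : ℝ | |x| ≤ c} = {x : ℝ | c < |x|}ᶜ := by
      ext x; simp [not_lt]
    rw [hcompl, measure_compl (measurableSet_ltAbs c) (measure_ne_top _ _), htail,
      measure_univ, ← ENNReal.ofReal_one, ← ENNReal.ofReal_sub _ hε0.le]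
  have hFc : F σ m c = 1 - ε := by
    have h2 := gaussMeas_abs_le hσ m c hc.le
    rw [hPS] at h2
    exact ((ENNReal.ofReal_eq_ofReal_iff (by linarith) (F_nonneg hσ m hc.le)).1 h2).symm
  refine ⟨hc, hFc, ?_⟩
  have hset2 : {x : ℝ | K ≤ -|x|} = {x : ℝ | |x| ≤ c} := by
    ext x; simp only [Set.mem_setOf_eq, hcdef]; constructor <;> intro h' <;> linarith
  have hSm : MeasurableSet {x : ℝ | |x| ≤ c} := measurableSet_absLe c
  have hint : IntegrableOn (fun x : ℝ => |x|) {x : ℝ | |x| ≤ c} P := by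
    apply Measure.integrableOn_of_bounded (M := c) (measure_ne_top _ _)
      continuous_abs.aestronglyMeasurable
    filter_upwards [ae_restrict_mem hSm] with x hx
    rwa [Real.norm_eq_abs, abs_abs]
  have hJ := hint.integral_eq_integral_meas_lt (Filter.Eventually.of_forall fun x => abs_nonneg x)
  have hptwise : ∀ t ∈ Set.Ioi (0:ℝ),
      ENNReal.toReal ((P.restrict {x : ℝ | |x| ≤ c}) {a : ℝ | t < |a|})
        = Set.indicator (Set.Ioo 0 c) (fun t => (1-ε) - F σ m t) t := by
    intro t ht
    rw [Measure.restrict_apply (measurableSet_ltAbs t)]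
    rcases lt_or_ge t c with htc | htc
    · have hseteq2 : {a : ℝ | t < |a|} ∩ {x : ℝ | |x| ≤ c}
          = {x : ℝ | |x| ≤ c} \ {x : ℝ | |x| ≤ t} := by
        ext x
        simp only [Set.mem_inter_iff, Set.mem_setOf_eq, Set.mem_diff, not_le]
        tauto
      have hFtc : F σ m t ≤ 1 - ε := by
        rw [← hFc]; exact F_mono_t hσ m htc.le
      have hsub2 : {x : ℝ | |x| ≤ t} ⊆ {x : ℝ | |x| ≤ c} := by
        intro x hx
        simp only [Set.mem_setOf_eq] at *
        linarith
      rw [hseteq2, measure_diff hsub2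
        (measurableSet_absLe t).nullMeasurableSet (measure_ne_top _ _),
        hPS, gaussMeas_abs_le hσ m t (le_of_lt ht),
        ← ENNReal.ofReal_sub _ (F_nonneg hσ m (le_of_lt ht)),
        ENNReal.toReal_ofReal (by linarith),
        Set.indicator_of_mem (Set.mem_Ioo.2 ⟨ht, htc⟩)]
    · have hempty : {a : ℝ | t < |a|} ∩ {x : ℝ | |x| ≤ c} = ∅ := by
        ext x
        simp only [Set.mem_inter_iff, Set.mem_setOf_eq, Set.mem_empty_iff_false, iff_false,
          not_and, not_le]
        intro hx; linarith
      rw [hempty, measure_empty,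
        Set.indicator_of_notMem (by simp [Set.mem_Ioo]; intro h'; linarith)]
      simp
  have hJ2 : ∫ x in {x : ℝ | |x| ≤ c}, |x| ∂P = ∫ t in (0:ℝ)..c, ((1-ε) - F σ m t) := by
    simp only [hJ, measureReal_def]
    rw [setIntegral_congr_fun measurableSet_Ioi hptwise,
      setIntegral_indicator measurableSet_Ioo,
      Set.inter_eq_right.2 Set.Ioo_subset_Ioi_self,
      intervalIntegral.integral_of_le hc.le, integral_Ioc_eq_integral_Ioo]
  rw [cvar, hset2, integral_neg, hJ2]
  ring

/-- Core comparison: strict decrease of the CVaR for `0 ≤ m₁ < m₂`. -/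
lemma core (σ ε : ℝ) (hσ : 0 < σ) (hε : ε ∈ Set.Ioo (0:ℝ) 1) (m₁ m₂ K₁ K₂ : ℝ)
    (hm₁ : 0 ≤ m₁) (hm : m₁ < m₂)
    (h1 : gaussMeas m₁ σ {x | -|x| ≤ K₁} = ENNReal.ofReal ε)
    (h2 : gaussMeas m₂ σ {x | -|x| ≤ K₂} = ENNReal.ofReal ε) :
    cvar (gaussMeas m₂ σ) ε (fun x => -|x|) K₂ < cvar (gaussMeas m₁ σ) ε (fun x => -|x|) K₁ := by
  obtain ⟨hc₁, hF₁, he₁⟩ := cvar_formula σ ε hσ hε m₁ K₁ h1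
  obtain ⟨hc₂, hF₂, he₂⟩ := cvar_formula σ ε hσ hε m₂ K₂ h2
  set c₁ := -K₁ with hc₁def
  set c₂ := -K₂ with hc₂def
  have hε1 : ε < 1 := hε.2
  have hm₂ : 0 ≤ m₂ := le_trans hm₁ hm.le
  have hc12 : c₁ < c₂ := by
    by_contra hcon
    push_neg at hcon
    have hlt : F σ m₂ c₁ < F σ m₁ c₁ := F_lt_F hσ hm₁ hm hc₁
    have hle : F σ m₂ c₂ ≤ F σ m₂ c₁ := F_mono_t hσ m₂ hcon
    rw [hF₂, ← hF₁] at hle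
    linarith
  rw [he₁, he₂]
  have hA : (0:ℝ) < 1/(1-ε) := by
    have : (0:ℝ) < 1 - ε := by linarith
    positivity
  have key : (∫ t in (0:ℝ)..c₁, ((1-ε) - F σ m₁ t)) < ∫ t in (0:ℝ)..c₂, ((1-ε) - F σ m₂ t) := by
    have hii : ∀ (μ a b : ℝ), IntervalIntegrable (fun t => (1-ε) - F σ μ t) volume a b :=
      fun μ a b => (continuous_const.sub (F_continuous_t σ μ)).intervalIntegrable a b
    have hsplit : (∫ t in (0:ℝ)..c₂, ((1-ε) - F σ m₂ t))
        = (∫ t in (0:ℝ)..c₁, ((1-ε) - F σ m₂ t)) + ∫ t in c₁..c₂, ((1-ε) - F σ m₂ t) :=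
      (intervalIntegral.integral_add_adjacent_intervals (hii m₂ 0 c₁) (hii m₂ c₁ c₂)).symm
    have hpiece1 : (∫ t in (0:ℝ)..c₁, ((1-ε) - F σ m₁ t))
        < ∫ t in (0:ℝ)..c₁, ((1-ε) - F σ m₂ t) := by
      have hpos : (0:ℝ) < ∫ t in (0:ℝ)..c₁, (F σ m₁ t - F σ m₂ t) := by
        apply intervalIntegral.intervalIntegral_pos_of_pos_on
        · exact ((F_continuous_t σ m₁).sub (F_continuous_t σ m₂)).intervalIntegrable 0 c₁
        · intro t ht
          have := F_lt_F hσ hm₁ hm (Set.mem_Ioo.1 ht).1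
          linarith
        · exact hc₁
      have hsub : (∫ t in (0:ℝ)..c₁, ((1-ε) - F σ m₂ t))
          - (∫ t in (0:ℝ)..c₁, ((1-ε) - F σ m₁ t))
          = ∫ t in (0:ℝ)..c₁, (F σ m₁ t - F σ m₂ t) := by
        rw [← intervalIntegral.integral_sub (hii m₂ 0 c₁) (hii m₁ 0 c₁)]
        congr 1
        funext t
        ring
      linarith
    have hpiece2 : (0:ℝ) ≤ ∫ t in c₁..c₂, ((1-ε) - F σ m₂ t) := by
      apply intervalIntegral.integral_nonneg hc12.le
      intro t ht
      have : F σ m₂ t ≤ F σ m₂ c₂ := F_mono_t hσ m₂ (Set.mem_Icc.1 ht).2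
      rw [hF₂] at this
      linarith
    linarith
  have := mul_lt_mul_of_pos_left key hA
  linarith

/-- Negation maps the Gaussian measure with mean `μ` to that with mean `-μ`. -/
lemma gaussMeas_neg (μ σ : ℝ) :
    Measure.map (fun x : ℝ => -x) (gaussMeas μ σ) = gaussMeas (-μ) σ := by
  unfold gaussMeas
  have h := gaussianReal_map_const_mul (μ := μ) (v := ⟨σ ^ 2, sq_nonneg σ⟩) (-1)
  have hfun : ((-1 : ℝ) * ·) = (fun x : ℝ => -x) := by
    funext x; ring
  have hvar : (NNReal.mk ((-1:ℝ) ^ 2) (sq_nonneg _) * ⟨σ ^ 2, sq_nonneg σ⟩ : ℝ≥0)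
      = (⟨σ ^ 2, sq_nonneg σ⟩ : ℝ≥0) := by
    ext
    simp
    exact congrArg _ (one_mul _)
  rw [hfun, hvar] at h
  rw [h]
  norm_num

lemma gaussMeas_symm_set {μ σ : ℝ} {s : Set ℝ} (hsm : MeasurableSet s)
    (hs : ∀ x, -x ∈ s ↔ x ∈ s) : gaussMeas (-μ) σ s = gaussMeas μ σ s := by
  rw [← gaussMeas_neg, Measure.map_apply measurable_neg hsm]
  congr 1
  ext x
  simp only [Set.mem_preimage]
  exact hs x

lemma gaussMeas_symm_integral {μ σ : ℝ} {s : Set ℝ} (hsm : MeasurableSet s)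
    (hs : ∀ x, -x ∈ s ↔ x ∈ s) {f : ℝ → ℝ} (hf : Continuous f)
    (hfe : ∀ x, f (-x) = f x) :
    ∫ x in s, f x ∂(gaussMeas (-μ) σ) = ∫ x in s, f x ∂(gaussMeas μ σ) := by
  have hpre : (fun x : ℝ => -x) ⁻¹' s = s := by
    ext x
    simp only [Set.mem_preimage]
    exact hs x
  rw [← gaussMeas_neg, Measure.restrict_map measurable_neg hsm, hpre,
    integral_map measurable_neg.aemeasurable hf.aestronglyMeasurable]
  simp_rw [hfe]

end CvarAux

open CvarAux in
/-- Fix `σ > 0` and `ε ∈ (0,1)`. For each `μ` let `X_μ ~ N(μ, σ²)`, let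
`k μ = VaR_ε[-|X_μ|]`, and let `g μ = CVaR_ε[-|X_μ|]`. Then `g` is monotonically
decreasing in `|μ|`: for any `μ₁, μ₂` with `|μ₁| < |μ₂|`, one has `g μ₁ > g μ₂`. -/
theorem cvar_neg_abs_strictAnti_in_abs_mean
    (σ ε : ℝ) (hσ : 0 < σ) (hε : ε ∈ Set.Ioo (0 : ℝ) 1)
    (k g : ℝ → ℝ)
    (hk : ∀ μ, gaussMeas μ σ {x | -|x| ≤ k μ} = ENNReal.ofReal ε)
    (hg : ∀ μ, g μ = cvar (gaussMeas μ σ) ε (fun x => -|x|) (k μ)) :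
    ∀ μ₁ μ₂, |μ₁| < |μ₂| → g μ₂ < g μ₁ := by
  -- transfer the hypotheses from `μ` to `|μ|` by symmetry
  have hsym1 : ∀ K : ℝ, MeasurableSet {x : ℝ | -|x| ≤ K} := by
    intro K
    exact (isClosed_le (continuous_abs.neg) continuous_const).measurableSet
  have hsym2 : ∀ K : ℝ, MeasurableSet {x : ℝ | K ≤ -|x|} := by
    intro K
    exact (isClosed_le continuous_const (continuous_abs.neg)).measurableSet
  have habs_k : ∀ μ, gaussMeas |μ| σ {x | -|x| ≤ k μ} = ENNReal.ofReal ε := by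
    intro μ
    rcases abs_choice μ with h | h
    · rw [h]; exact hk μ
    · rw [h, gaussMeas_symm_set (hsym1 (k μ)) (by intro x; simp)]
      exact hk μ
  have habs_g : ∀ μ, g μ = cvar (gaussMeas |μ| σ) ε (fun x => -|x|) (k μ) := by
    intro μ
    rcases abs_choice μ with h | h
    · rw [h]; exact hg μ
    · rw [h, hg μ]
      unfold cvar
      congr 1
      exact (gaussMeas_symm_integral (hsym2 (k μ)) (by intro x; simp)
        (continuous_abs.neg) (by intro x; simp)).symm
  intro μ₁ μ₂ hlt
  rw [habs_g μ₁, habs_g μ₂]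
  exact core σ ε hσ hε |μ₁| |μ₂| (k μ₁) (k μ₂) (abs_nonneg μ₁) hlt (habs_k μ₁) (habs_k μ₂)
end

section
/- Let X ~ N(μ, σ²) with σ > 0 and let ε ∈ (0,1). If μ < 0 and VaR_ε[X] < 0, then CVaR_ε[X] > CVaR_ε[-|X|]. -/
open MeasureTheory ProbabilityTheory Real

lemma gaussVar_ne_zero {σ : ℝ} (hσ : 0 < σ) : (⟨σ ^ 2, sq_nonneg σ⟩ : NNReal) ≠ 0 := by
  intro h
  have : σ ^ 2 = 0 := congrArg NNReal.toReal h
  exact pow_ne_zero 2 hσ.ne' this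

lemma gaussMeas_pos_of_Ioc {μ σ : ℝ} (hσ : 0 < σ) {a b : ℝ} (hab : a < b) :
    0 < gaussMeas μ σ (Set.Ioc a b) := by
  rw [pos_iff_ne_zero]
  intro h
  have hac := gaussianReal_absolutelyContinuous' μ (gaussVar_ne_zero hσ)
  have : (volume : Measure ℝ) (Set.Ioc a b) = 0 := hac h
  rw [Real.volume_Ioc] at this
  simp only [ENNReal.ofReal_eq_zero, sub_nonpos] at this
  exact absurd this (not_le.mpr hab)

lemma integrable_id_gaussMeas (μ : ℝ) {σ : ℝ} (hσ : 0 < σ) :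
    Integrable (fun x => x) (gaussMeas μ σ) := by
  have hv := gaussVar_ne_zero hσ
  rw [gaussMeas, gaussianReal_of_var_ne_zero _ hv]
  refine (integrable_withDensity_iff (measurable_gaussianPDF _ _)
      (ae_of_all _ fun x => ENNReal.ofReal_lt_top)).mpr ?_
  have hvr : ((⟨σ ^ 2, sq_nonneg σ⟩ : NNReal) : ℝ) = σ ^ 2 := rfl
  have hb : (0 : ℝ) < (2 * σ ^ 2)⁻¹ := by positivity
  have h1 := integrable_mul_exp_neg_mul_sq hb
  have h2 := (integrable_exp_neg_mul_sq hb).const_mul μ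
  have key : Integrable (fun y : ℝ => (y + μ) * rexp (-(2 * σ ^ 2)⁻¹ * y ^ 2)) :=
    (h1.add h2).congr (Filter.Eventually.of_forall fun y => by
      simp only [Pi.add_apply]; ring)
  have key2 := key.comp_sub_right μ
  refine (key2.const_mul (√(2 * π * σ ^ 2))⁻¹).congr
    (Filter.Eventually.of_forall fun x => ?_)
  show _ = x * (ENNReal.ofReal ((√(2 * π * σ ^ 2))⁻¹ * rexp (-(x - μ) ^ 2 / (2 * σ ^ 2)))).toReal
  rw [ENNReal.toReal_ofReal (by positivity)]
  rw [show -(x - μ) ^ 2 / (2 * σ ^ 2) = -(2 * σ ^ 2)⁻¹ * (x - μ) ^ 2 by ring]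
  ring

/-- For `X ~ N(μ, σ²)` with `σ > 0` and `ε ∈ (0,1)`: if `μ < 0` and `VaR_ε[X] < 0`,
then `CVaR_ε[X] > CVaR_ε[-|X|]`. Here `kX = VaR_ε[X]` and `kY = VaR_ε[-|X|]`. -/
theorem cvar_gt_cvar_neg_abs_of_neg_mean
    (μ σ ε kX kY : ℝ) (hσ : 0 < σ) (hε : ε ∈ Set.Ioo (0 : ℝ) 1)
    (hkX : gaussMeas μ σ {x | x ≤ kX} = ENNReal.ofReal ε)
    (hkY : gaussMeas μ σ {x | -|x| ≤ kY} = ENNReal.ofReal ε)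
    (hμ : μ < 0) (hkXneg : kX < 0) :
    cvar (gaussMeas μ σ) ε (fun x => x) kX > cvar (gaussMeas μ σ) ε (fun x => -|x|) kY := by
  set P := gaussMeas μ σ with hP
  haveI : IsProbabilityMeasure P := by rw [hP, gaussMeas]; exact instIsProbabilityMeasureGaussianReal _ _
  have hεofReal_lt_one : ENNReal.ofReal ε < 1 := ENNReal.ofReal_lt_one.mpr hε.2
  -- integrability
  have hint : Integrable (fun x : ℝ => x) P := integrable_id_gaussMeas μ hσ
  have hintY : Integrable (fun x : ℝ => -|x|) P := hint.abs.neg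
  -- kY < 0
  have hkYneg : kY < 0 := by
    by_contra h
    push_neg at h
    have huniv : {x : ℝ | -|x| ≤ kY} = Set.univ := by
      ext x
      simp only [Set.mem_setOf_eq, Set.mem_univ, iff_true]
      exact le_trans (neg_nonpos_of_nonneg (abs_nonneg x)) h
    rw [huniv, measure_univ] at hkY
    exact absurd hkY.symm (ne_of_lt hεofReal_lt_one)
  -- kY ≤ kX
  have hkYX : kY ≤ kX := by
    by_contra h
    push_neg at h
    have hsub : Set.Iic kY ⊆ {x : ℝ | -|x| ≤ kY} := by
      intro x hx
      simp only [Set.mem_setOf_eq]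
      have hx' : x < 0 := lt_of_le_of_lt hx hkYneg
      rw [abs_of_neg hx', neg_neg]
      exact hx
    have hsplit : Set.Iic kX ∪ Set.Ioc kX kY = Set.Iic kY :=
      Set.Iic_union_Ioc_eq_Iic h.le
    have hdisj : Disjoint (Set.Iic kX) (Set.Ioc kX kY) :=
      Set.disjoint_left.mpr fun x hx hx' => absurd hx (not_le.mpr hx'.1)
    have hkX' : P (Set.Iic kX) = ENNReal.ofReal ε := hkX
    have hIic : P (Set.Iic kY) = ENNReal.ofReal ε + P (Set.Ioc kX kY) := by
      rw [← hsplit, measure_union hdisj measurableSet_Ioc, hkX']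
    have hlt : ENNReal.ofReal ε < P (Set.Iic kY) := by
      rw [hIic]
      exact ENNReal.lt_add_right ENNReal.ofReal_ne_top
        (gaussMeas_pos_of_Ioc hσ h).ne'
    have := lt_of_lt_of_le hlt (measure_mono hsub)
    rw [hkY] at this
    exact lt_irrefl _ this
  -- rewrite sets
  have hsetX : {x : ℝ | kX ≤ x} = Set.Ici kX := rfl
  have hsetY : {x : ℝ | kY ≤ -|x|} = Set.Icc kY (-kY) := by
    ext x
    simp only [Set.mem_setOf_eq, Set.mem_Icc]
    rw [le_neg, abs_le, neg_neg]
  have hkXnegkY : kX ≤ -kY := le_of_lt (lt_trans hkXneg (neg_pos.mpr hkYneg))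
  -- split the integrals
  have hsplit1 : Set.Icc kX (-kY) ∪ Set.Ioi (-kY) = Set.Ici kX :=
    Set.Icc_union_Ioi_eq_Ici hkXnegkY
  have hsplit2 : Set.Ico kY kX ∪ Set.Icc kX (-kY) = Set.Icc kY (-kY) :=
    Set.Ico_union_Icc_eq_Icc hkYX hkXnegkY
  have hdisj1 : Disjoint (Set.Icc kX (-kY)) (Set.Ioi (-kY)) :=
    Set.disjoint_left.mpr fun x hx hx' => absurd hx.2 (not_le.mpr hx')
  have hdisj2 : Disjoint (Set.Ico kY kX) (Set.Icc kX (-kY)) :=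
    Set.disjoint_left.mpr fun x hx hx' => absurd hx'.1 (not_le.mpr hx.2)
  have hI1 : ∫ x in Set.Ici kX, x ∂P
      = (∫ x in Set.Icc kX (-kY), x ∂P) + ∫ x in Set.Ioi (-kY), x ∂P := by
    rw [← hsplit1, setIntegral_union hdisj1 measurableSet_Ioi
      hint.integrableOn hint.integrableOn]
  have hI2 : ∫ x in Set.Icc kY (-kY), -|x| ∂P
      = (∫ x in Set.Ico kY kX, -|x| ∂P) + ∫ x in Set.Icc kX (-kY), -|x| ∂P := by
    rw [← hsplit2, setIntegral_union hdisj2 measurableSet_Icc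
      hintY.integrableOn hintY.integrableOn]
  -- term estimates
  have hB : 0 ≤ ∫ x in Set.Ioi (-kY), x ∂P := by
    refine setIntegral_nonneg measurableSet_Ioi fun x hx => ?_
    have : (0 : ℝ) < -kY := neg_pos.mpr hkYneg
    exact le_of_lt (lt_trans this hx)
  have hC : ∫ x in Set.Ico kY kX, -|x| ∂P ≤ 0 :=
    setIntegral_nonpos measurableSet_Ico fun x _ => neg_nonpos_of_nonneg (abs_nonneg x)
  have hA : ∫ x in Set.Icc kX (-kY), -|x| ∂P < ∫ x in Set.Icc kX (-kY), x ∂P := by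
    rw [← sub_pos, ← integral_sub hint.integrableOn hintY.integrableOn]
    have heq : ∀ x : ℝ, x - -|x| = x + |x| := fun x => by ring
    simp_rw [heq]
    have hposint : IntegrableOn (fun a : ℝ => a + |a|) (Set.Icc kX (-kY)) P :=
      (hint.add hint.abs).integrableOn
    rw [setIntegral_pos_iff_support_of_nonneg_ae
      (Filter.Eventually.of_forall fun x => by
        simp only [Pi.zero_apply]; linarith [neg_abs_le x]) hposint]
    have hsub : Set.Ioc 0 (-kY) ⊆ Function.support (fun x : ℝ => x + |x|)
        ∩ Set.Icc kX (-kY) := by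
      intro x hx
      constructor
      · simp only [Function.mem_support]
        have hx0 : 0 < x := hx.1
        rw [abs_of_pos hx0]
        positivity
      · exact ⟨(hkXneg.trans hx.1).le, hx.2⟩
    exact lt_of_lt_of_le (gaussMeas_pos_of_Ioc hσ (neg_pos.mpr hkYneg)) (measure_mono hsub)
  -- put it together
  have hmain : ∫ x in {x : ℝ | kY ≤ -|x|}, -|x| ∂P < ∫ x in {x : ℝ | kX ≤ x}, x ∂P := by
    rw [hsetX, hsetY, hI1, hI2]
    linarith
  have hcoef : (0 : ℝ) < 1 / (1 - ε) := by
    have : 0 < 1 - ε := by linarith [hε.2]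
    positivity
  exact mul_lt_mul_of_pos_left hmain hcoef
end
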